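/- Let V be a finite-dimensional real vector space, ω a skew-symmetric bilinear form on V, W a linear subspace of End(V), and fix v̄₁, v̄₂ ∈ V with ω(v̄₁,v̄₂) ≠ 0. For a linear map φ : V → W the following are equivalent: (i) for all v₁,v₂ ∈ V, φ(v₁)v₂ − φ(v₂)v₁ = (ω(v₁,v₂)/ω(v̄₁,v̄₂))·(φ(v̄₁)v̄₂ − φ(v̄₂)v̄₁) (that is, φ lies in the kernel of the modified Spencer operator defined by the pair (v̄₁,v̄₂)); (ii) there exists v ∈ V such that φ(v₁)v₂ − φ(v₂)v₁ = ω(v₁,v₂)·v for all v₁,v₂ ∈ V; (iii) ω(u₁,u₂)·(φ(v₁)v₂ − φ(v₂)v₁) = ω(v₁,v₂)·(φ(u₁)u₂ − φ(u₂)u₁) for all v₁,v₂,u₁,u₂ ∈ V. In particular, the kernel of the modified Spencer operator does not depend on the choice of the pair (v̄₁,v̄₂) with ω(v̄₁,v̄₂) ≠ 0. -/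
import Mathlib


/-- Equivalent characterizations of the kernel of the modified
Spencer operator: (i) membership in the kernel of the modified Spencer operator
defined by a fixed pair `(v̄₁, v̄₂)` with `ω v̄₁ v̄₂ ≠ 0`; (ii) existence of a vector
`v` with `φ(v₁)v₂ − φ(v₂)v₁ = ω(v₁,v₂) • v`; (iii) a symmetric condition independent
of any choice of pair.  In particular the kernel is independent of the pair. -/
theorem stmt_0 (V : Type*) [AddCommGroup V] [Module ℝ V] [FiniteDimensional ℝ V]
    (ω : V →ₗ[ℝ] V →ₗ[ℝ] ℝ) (hskew : ∀ x y : V, ω x y = - ω y x)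
    (W : Submodule ℝ (V →ₗ[ℝ] V))
    (vb₁ vb₂ : V) (hvb : ω vb₁ vb₂ ≠ 0)
    (φ : V →ₗ[ℝ] (V →ₗ[ℝ] V)) (hφW : ∀ z : V, φ z ∈ W) :
    ((∀ v₁ v₂ : V, φ v₁ v₂ - φ v₂ v₁
        = (ω v₁ v₂ / ω vb₁ vb₂) • (φ vb₁ vb₂ - φ vb₂ vb₁)) ↔
      (∃ v : V, ∀ v₁ v₂ : V, φ v₁ v₂ - φ v₂ v₁ = ω v₁ v₂ • v)) ∧
    ((∃ v : V, ∀ v₁ v₂ : V, φ v₁ v₂ - φ v₂ v₁ = ω v₁ v₂ • v) ↔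
      (∀ v₁ v₂ u₁ u₂ : V,
        ω u₁ u₂ • (φ v₁ v₂ - φ v₂ v₁) = ω v₁ v₂ • (φ u₁ u₂ - φ u₂ u₁))) := by
  constructor
  · constructor
    · intro h
      refine ⟨(ω vb₁ vb₂)⁻¹ • (φ vb₁ vb₂ - φ vb₂ vb₁), fun v₁ v₂ => ?_⟩
      rw [h v₁ v₂, smul_smul, div_eq_mul_inv]
    · rintro ⟨v, hv⟩ v₁ v₂
      rw [hv v₁ v₂, hv vb₁ vb₂, smul_smul, div_mul_cancel₀ _ hvb]
  · constructor
    · rintro ⟨v, hv⟩ v₁ v₂ u₁ u₂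
      rw [hv v₁ v₂, hv u₁ u₂, smul_smul, smul_smul, mul_comm]
    · intro h
      refine ⟨(ω vb₁ vb₂)⁻¹ • (φ vb₁ vb₂ - φ vb₂ vb₁), fun v₁ v₂ => ?_⟩
      have := h v₁ v₂ vb₁ vb₂
      rw [smul_smul, mul_comm, ← smul_smul, ← this, smul_smul,
        inv_mul_cancel₀ hvb, one_smul]
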